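/- Let $V$ be a real inner product space, let $p_c, p_d, \hat{H}, H_c, H_d \in V$ with $p_c \ne p_d$, and let $F_c, F_d \in \mathbb{R}$. Define the scalar correction factor $\alpha := \dfrac{(F_d - F_c) + \hat{H} \cdot (p_d - p_c) - (p_d \cdot H_d - p_c \cdot H_c)}{\|p_d - p_c\|^2}$ and the corrected flux $\tilde{H} := \hat{H} - \alpha\,(p_d - p_c)$. Then the entropy conservation condition holds exactly: $p_c \cdot (\tilde{H} - H_c) + p_d \cdot (H_d - \tilde{H}) = F_d - F_c$. -/

import Mathlib

open RealInnerProductSpace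

/-- The scalar flux correction factor (eq. (3.45)) enforces the entropy conservation
condition (eq. (3.44)) exactly across a face. -/
theorem flux_correction_entropy_conservation
    {V : Type*} [NormedAddCommGroup V] [InnerProductSpace ℝ V]
    (pc pd Hhat Hc Hd : V) (hne : pc ≠ pd) (Fc Fd : ℝ)
    (α : ℝ)
    (hα : α = ((Fd - Fc) + ⟪Hhat, pd - pc⟫ - (⟪pd, Hd⟫ - ⟪pc, Hc⟫)) / ‖pd - pc‖ ^ 2)
    (Htil : V) (hH : Htil = Hhat - α • (pd - pc)) :
    ⟪pc, Htil - Hc⟫ + ⟪pd, Hd - Htil⟫ = Fd - Fc := by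
  have hne' : pd - pc ≠ 0 := sub_ne_zero.mpr (Ne.symm hne)
  have hn : ‖pd - pc‖ ^ 2 ≠ 0 := pow_ne_zero _ (norm_ne_zero_iff.mpr hne')
  have hself : ⟪pd - pc, pd - pc⟫ = ‖pd - pc‖ ^ 2 := real_inner_self_eq_norm_sq _
  have hα' : α * ‖pd - pc‖ ^ 2
      = (Fd - Fc) + ⟪Hhat, pd - pc⟫ - (⟪pd, Hd⟫ - ⟪pc, Hc⟫) := by
    rw [hα, div_mul_cancel₀ _ hn]
  subst hH
  simp only [inner_sub_left, inner_sub_right, inner_smul_left, inner_smul_right,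
    real_inner_comm Hhat (pd - pc)] at *
  have h1 : (inner ℝ Hhat pc : ℝ) = inner ℝ pc Hhat := real_inner_comm _ _
  have h2 : (inner ℝ Hhat pd : ℝ) = inner ℝ pd Hhat := real_inner_comm _ _
  have h3 : (inner ℝ pc pd : ℝ) = inner ℝ pd pc := real_inner_comm _ _
  have h4 : α * ((inner ℝ pd pd : ℝ) - inner ℝ pc pd - (inner ℝ pd pc - inner ℝ pc pc))
      = α * ‖pd - pc‖ ^ 2 := by rw [hself]
  ring_nf at h4 ⊢
  linarith [hα', h1, h2, h3, h4]
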